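/- Let R be a commutative ring, 𝔗 a torsion theory over R, and {F^i}_{i≥0} a negative strongly connected sequence of covariant functors on R-modules having the 𝔗-restriction property. Let C_•: 0 → C_s → C_{s−1} → ⋯ → C_1 → C_0 → 0 be a complex of R-modules such that for all 1 ≤ i ≤ s: (i) F^j(C_i) ∈ 𝔗 for all j < i (i.e., F^−(C_i) ≥ i), and (ii) either H_i(C_•) ∈ 𝔗 or F^0(H_i(C_•)) ∉ 𝔗 (i.e., F^−(H_i(C_•)) = 0). Then H_i(C_•) ∈ 𝔗 for all 1 ≤ i ≤ s. -/

import Mathlib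

open CategoryTheory

universe u

noncomputable section

/-- A torsion theory over `R`: a class of `R`-modules closed under isomorphism, submodules,
quotient modules, extensions, and directed colimits (formulated as closure under directed
unions of submodules). -/
structure IsTorsionTheory (R : Type u) [CommRing R] (T : Set (ModuleCat.{u} R)) : Prop where
  mem_of_iso : ∀ {N N' : ModuleCat.{u} R}, (N ≅ N') → N ∈ T → N' ∈ T
  submodule_mem : ∀ {N : ModuleCat.{u} R}, N ∈ T → ∀ S : Submodule R N,
    ModuleCat.of R S ∈ T
  quotient_mem : ∀ {N : ModuleCat.{u} R}, N ∈ T → ∀ S : Submodule R N,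
    ModuleCat.of R (N ⧸ S) ∈ T
  ext_mem : ∀ {N : ModuleCat.{u} R} (S : Submodule R N),
    ModuleCat.of R S ∈ T → ModuleCat.of R (N ⧸ S) ∈ T → N ∈ T
  directed_mem : ∀ {N : ModuleCat.{u} R} {ι : Type u} [Nonempty ι] (S : ι → Submodule R N),
    Directed (· ≤ ·) S → (∀ i, ModuleCat.of R (S i) ∈ T) → iSup S = ⊤ → N ∈ T

/-- A negative strongly connected sequence of covariant functors on `R`-modules:
a sequence of additive functors `F i` together with connecting homomorphisms turning every
short exact sequence `0 → A → B → C → 0` into a long exact sequence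
`0 → F 0 A → F 0 B → F 0 C → F 1 A → F 1 B → F 1 C → ⋯`. -/
structure NegStronglyConnectedSeq (R : Type u) [CommRing R] where
  F : ℕ → ModuleCat.{u} R ⥤ ModuleCat.{u} R
  additive : ∀ i, (F i).Additive
  δ : ∀ ⦃A B C : ModuleCat.{u} R⦄ (f : A ⟶ B) (g : B ⟶ C),
    Function.Injective f → Function.Surjective g → Function.Exact f g →
    ∀ i : ℕ, ((F i).obj C ⟶ (F (i + 1)).obj A)
  injective_first : ∀ ⦃A B C : ModuleCat.{u} R⦄ (f : A ⟶ B) (g : B ⟶ C)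
    (hf : Function.Injective f) (hg : Function.Surjective g) (hfg : Function.Exact f g),
    Function.Injective ((F 0).map f)
  exact_map_map : ∀ ⦃A B C : ModuleCat.{u} R⦄ (f : A ⟶ B) (g : B ⟶ C)
    (hf : Function.Injective f) (hg : Function.Surjective g) (hfg : Function.Exact f g)
    (i : ℕ), Function.Exact ((F i).map f) ((F i).map g)
  exact_map_δ : ∀ ⦃A B C : ModuleCat.{u} R⦄ (f : A ⟶ B) (g : B ⟶ C)
    (hf : Function.Injective f) (hg : Function.Surjective g) (hfg : Function.Exact f g)
    (i : ℕ), Function.Exact ((F i).map g) (δ f g hf hg hfg i)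
  exact_δ_map : ∀ ⦃A B C : ModuleCat.{u} R⦄ (f : A ⟶ B) (g : B ⟶ C)
    (hf : Function.Injective f) (hg : Function.Surjective g) (hfg : Function.Exact f g)
    (i : ℕ), Function.Exact (δ f g hf hg hfg i) ((F (i + 1)).map f)

/-- The `𝔗`-restriction property for a sequence of functors: `F i` maps modules of `𝔗`
to modules of `𝔗`. -/
def NegStronglyConnectedSeq.HasRestriction {R : Type u} [CommRing R]
    (Fs : NegStronglyConnectedSeq R) (T : Set (ModuleCat.{u} R)) : Prop :=
  ∀ N ∈ T, ∀ i : ℕ, (Fs.F i).obj N ∈ T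

/-- The homology of a complex `⋯ → C (i+2) → C (i+1) → C i → ⋯` at the spot `i + 1`. -/
abbrev homologyAt {R : Type u} [CommRing R] {C : ℕ → ModuleCat.{u} R}
    (d : ∀ i : ℕ, C (i + 1) ⟶ C i) (i : ℕ) : Type u :=
  ↥(LinearMap.ker (d i).hom) ⧸
    (Submodule.comap (LinearMap.ker (d i).hom).subtype (LinearMap.range (d (i + 1)).hom))

section AuxLemmas

variable {R : Type u} [CommRing R] {T : Set (ModuleCat.{u} R)}

/-- A linear equiv between (possibly unbundled) modules transfers membership. -/
lemma IsTorsionTheory.mem_of_equiv (hT : IsTorsionTheory R T)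
    {M N : Type u} [AddCommGroup M] [Module R M] [AddCommGroup N] [Module R N]
    (e : M ≃ₗ[R] N) (h : ModuleCat.of R M ∈ T) : ModuleCat.of R N ∈ T :=
  hT.mem_of_iso e.toModuleIso h

lemma IsTorsionTheory.mem_of_subsingleton (hT : IsTorsionTheory R T)
    {M : ModuleCat.{u} R} (hM : M ∈ T) (N : ModuleCat.{u} R) (hN : Subsingleton N) : N ∈ T := by
  have hbot : ModuleCat.of R (⊥ : Submodule R M) ∈ T := hT.submodule_mem hM ⊥
  have e : (⊥ : Submodule R M) ≃ₗ[R] N :=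
    { toFun := fun _ => 0, map_add' := by intros; simp, map_smul' := by intros; simp,
      invFun := fun _ => 0, left_inv := fun x => Subsingleton.elim _ _,
      right_inv := fun x => Subsingleton.elim _ _ }
  exact hT.mem_of_iso (Iso.refl N) (hT.mem_of_equiv e hbot)

lemma IsTorsionTheory.mem_of_injective (hT : IsTorsionTheory R T)
    {A B : ModuleCat.{u} R} (f : A ⟶ B) (hf : Function.Injective f) (hB : B ∈ T) : A ∈ T := by
  have h1 : ModuleCat.of R (LinearMap.range f.hom) ∈ T := hT.submodule_mem hB _
  have e : (LinearMap.range f.hom) ≃ₗ[R] A := (LinearEquiv.ofInjective f.hom hf).symm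
  exact hT.mem_of_iso (Iso.refl A) (hT.mem_of_equiv e h1)

lemma IsTorsionTheory.mem_of_exact (hT : IsTorsionTheory R T)
    {A B C : ModuleCat.{u} R} (f : A ⟶ B) (g : B ⟶ C)
    (h : Function.Exact f g) (hA : A ∈ T) (hC : C ∈ T) : B ∈ T := by
  have hker : LinearMap.ker g.hom = LinearMap.range f.hom :=
    (LinearMap.exact_iff (f := f.hom) (g := g.hom)).mp h
  apply hT.ext_mem (LinearMap.ker g.hom)
  · rw [hker]
    exact hT.mem_of_equiv (LinearMap.quotKerEquivRange f.hom) (hT.quotient_mem hA _)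
  · have h1 : ModuleCat.of R (LinearMap.range g.hom) ∈ T := hT.submodule_mem hC _
    exact hT.mem_of_equiv (LinearMap.quotKerEquivRange g.hom).symm h1

/-- SES `0 → ker (d i) → C (i+1) → range (d i) → 0`. -/
lemma sesA {C : ℕ → ModuleCat.{u} R} (d : ∀ i : ℕ, C (i + 1) ⟶ C i) (i : ℕ) :
    ∃ (f : ModuleCat.of R ↥(LinearMap.ker (d i).hom) ⟶ C (i+1))
      (g : C (i+1) ⟶ ModuleCat.of R ↥(LinearMap.range (d i).hom)),
      Function.Injective f ∧ Function.Surjective g ∧ Function.Exact f g := by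
  refine ⟨ModuleCat.ofHom (LinearMap.ker (d i).hom).subtype, ModuleCat.ofHom (d i).hom.rangeRestrict,
    Submodule.injective_subtype _, LinearMap.surjective_rangeRestrict _, ?_⟩
  refine (LinearMap.exact_iff (f := (LinearMap.ker (d i).hom).subtype)
    (g := (d i).hom.rangeRestrict)).mpr ?_
  rw [LinearMap.ker_rangeRestrict, Submodule.range_subtype]

/-- SES `0 → B_i → ker (d i) → homologyAt d i → 0`. -/
lemma sesB {C : ℕ → ModuleCat.{u} R} (d : ∀ i : ℕ, C (i + 1) ⟶ C i) (i : ℕ) :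
    ∃ (f : ModuleCat.of R ↥(Submodule.comap (LinearMap.ker (d i).hom).subtype
        (LinearMap.range (d (i + 1)).hom)) ⟶ ModuleCat.of R ↥(LinearMap.ker (d i).hom))
      (g : ModuleCat.of R ↥(LinearMap.ker (d i).hom) ⟶ ModuleCat.of R (homologyAt d i)),
      Function.Injective f ∧ Function.Surjective g ∧ Function.Exact f g := by
  refine ⟨ModuleCat.ofHom (Submodule.comap (LinearMap.ker (d i).hom).subtype
      (LinearMap.range (d (i + 1)).hom)).subtype,
    ModuleCat.ofHom (Submodule.comap (LinearMap.ker (d i).hom).subtype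
      (LinearMap.range (d (i + 1)).hom)).mkQ,
    Submodule.injective_subtype _, Submodule.mkQ_surjective _, ?_⟩
  refine (LinearMap.exact_iff (f := (Submodule.comap (LinearMap.ker (d i).hom).subtype
      (LinearMap.range (d (i + 1)).hom)).subtype) (g := (Submodule.comap (LinearMap.ker (d i).hom).subtype
      (LinearMap.range (d (i + 1)).hom)).mkQ)).mpr ?_
  rw [Submodule.ker_mkQ, Submodule.range_subtype]

end AuxLemmas

/-- **Theorem (acyclicity lemma).** Let `{F^i}` be a negative strongly connected sequence of
covariant functors with the `𝔗`-restriction property, and let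
`C_• : 0 → C_s → ⋯ → C_1 → C_0 → 0` be a complex of `R`-modules such that for all
`1 ≤ i ≤ s`: (i) `F^j(C_i) ∈ 𝔗` for all `j < i`, and (ii) either `H_i(C_•) ∈ 𝔗` or
`F^0(H_i(C_•)) ∉ 𝔗`. Then `H_i(C_•) ∈ 𝔗` for all `1 ≤ i ≤ s`.
(Here the homology `H_{i+1}(C_•)` is `homologyAt d i`, and the vanishing of the complex in
degrees `> s` is expressed by requiring those components to be subsingletons.) -/

theorem homologyAt_mem_of_negStronglyConnectedSeq {R : Type u} [CommRing R]
    (T : Set (ModuleCat.{u} R)) (hT : IsTorsionTheory R T)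
    (Fs : NegStronglyConnectedSeq R) (hres : Fs.HasRestriction T)
    (s : ℕ) (C : ℕ → ModuleCat.{u} R) (d : ∀ i : ℕ, C (i + 1) ⟶ C i)
    (hdd : ∀ i : ℕ, d (i + 1) ≫ d i = 0)
    (htop : ∀ j : ℕ, s < j → Subsingleton (C j))
    (h1 : ∀ i : ℕ, 1 ≤ i → i ≤ s → ∀ j < i, (Fs.F j).obj (C i) ∈ T)
    (h2 : ∀ i : ℕ, i + 1 ≤ s → ModuleCat.of R (homologyAt d i) ∈ T ∨
      (Fs.F 0).obj (ModuleCat.of R (homologyAt d i)) ∉ T) :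
    ∀ i : ℕ, i + 1 ≤ s → ModuleCat.of R (homologyAt d i) ∈ T := by
  have key : ∀ m : ℕ, ∀ t : ℕ, s ≤ t + m → t + 1 ≤ s →
      ModuleCat.of R (homologyAt d t) ∈ T := by
    intro m
    induction m with
    | zero => intro t hts ht; omega
    | succ m IH =>
      intro t hts ht
      -- homology in higher degrees is already known to be in T
      have Hgt : ∀ j : ℕ, t < j → j + 1 ≤ s → ModuleCat.of R (homologyAt d j) ∈ T :=
        fun j hj hjs => IH j (by omega) hjs
      -- a nonzero member of T, for the subsingleton lemma
      have hC1 : (Fs.F 0).obj (C 1) ∈ T := h1 1 le_rfl (by omega) 0 (by omega)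
      have hzero : ∀ N : ModuleCat.{u} R, Subsingleton N → N ∈ T :=
        fun N hN => hT.mem_of_subsingleton hC1 N hN
      -- degenerate case: range of a differential out of a subsingleton module
      have hsmall : ∀ k : ℕ, s ≤ t + 1 + k →
          ∀ l : ℕ, (Fs.F l).obj (ModuleCat.of R ↥(LinearMap.range (d (t+1+k)).hom)) ∈ T := by
        intro k hk l
        have hsub : Subsingleton (C (t+1+k+1)) := htop _ (by omega)
        have hd0 : d (t+1+k) = 0 := by
          apply ModuleCat.hom_ext; apply LinearMap.ext; intro y
          rw [Subsingleton.elim y 0]; simp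
        have hrng : LinearMap.range (d (t+1+k)).hom = ⊥ := by
          rw [hd0, ModuleCat.hom_zero]; exact LinearMap.range_zero
        have : Subsingleton ↥(LinearMap.range (d (t+1+k)).hom) := by
          rw [hrng]; infer_instance
        exact hres _ (hzero _ this) l
      -- the key descending-induction claim
      have claim : ∀ n : ℕ, ∀ k : ℕ, s ≤ t + 1 + k + n →
          (Fs.F (k+1)).obj (ModuleCat.of R ↥(LinearMap.range (d (t+1+k)).hom)) ∈ T := by
        intro n
        induction n with
        | zero => intro k hk; exact hsmall k (by omega) (k+1)
        | succ n ih =>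
          intro k hk
          by_cases hcase : s ≤ t + 1 + k
          · exact hsmall k hcase (k+1)
          · have hjs : t + 1 + k + 1 ≤ s := by omega
            -- F^{k+1}(C (t+1+k+1)) ∈ T
            have A1 : (Fs.F (k+1)).obj (C (t+1+k+1)) ∈ T :=
              h1 (t+1+k+1) (by omega) hjs (k+1) (by omega)
            -- F^{k+2}(ker (d (t+1+k))) ∈ T  via SES (B)
            have A2 : (Fs.F (k+2)).obj (ModuleCat.of R ↥(LinearMap.ker (d (t+1+k)).hom)) ∈ T := by
              obtain ⟨f, g, hf, hg, hfg⟩ := sesB d (t+1+k)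
              -- F^{k+2} of the boundary module
              have B1 : (Fs.F (k+2)).obj (ModuleCat.of R
                  ↥(Submodule.comap (LinearMap.ker (d (t+1+k)).hom).subtype
                    (LinearMap.range (d (t+1+k+1)).hom))) ∈ T := by
                have hrng : (Fs.F (k+2)).obj
                    (ModuleCat.of R ↥(LinearMap.range (d (t+1+(k+1))).hom)) ∈ T :=
                  ih (k+1) (by omega)
                have hle : LinearMap.range (d (t+1+k+1)).hom ≤ LinearMap.ker (d (t+1+k)).hom := by
                  rintro x ⟨y, rfl⟩
                  have h0 : (d (t+1+k+1) ≫ d (t+1+k)).hom y = 0 := by rw [hdd]; rfl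
                  simpa [ModuleCat.hom_comp] using h0
                have e := (Submodule.comapSubtypeEquivOfLe hle).symm
                exact hT.mem_of_iso ((Fs.F (k+2)).mapIso e.toModuleIso) hrng
              have B2 : (Fs.F (k+2)).obj (ModuleCat.of R (homologyAt d (t+1+k))) ∈ T :=
                hres _ (Hgt (t+1+k) (by omega) hjs) (k+2)
              exact hT.mem_of_exact ((Fs.F (k+2)).map f) ((Fs.F (k+2)).map g)
                (Fs.exact_map_map f g hf hg hfg (k+2)) B1 B2
            -- conclude via SES (A)
            obtain ⟨f, g, hf, hg, hfg⟩ := sesA d (t+1+k)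
            exact hT.mem_of_exact ((Fs.F (k+1)).map g) (Fs.δ f g hf hg hfg (k+1))
              (Fs.exact_map_δ f g hf hg hfg (k+1)) A1 A2
      -- F^0(ker (d t)) ∈ T
      have hZ : (Fs.F 0).obj (ModuleCat.of R ↥(LinearMap.ker (d t).hom)) ∈ T := by
        obtain ⟨f, g, hf, hg, hfg⟩ := sesA d t
        have hCt : (Fs.F 0).obj (C (t+1)) ∈ T := h1 (t+1) (by omega) ht 0 (by omega)
        exact hT.mem_of_injective ((Fs.F 0).map f) (Fs.injective_first f g hf hg hfg) hCt
      -- F^1(B_t) ∈ T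
      have hB : (Fs.F 1).obj (ModuleCat.of R
          ↥(Submodule.comap (LinearMap.ker (d t).hom).subtype
            (LinearMap.range (d (t+1)).hom))) ∈ T := by
        have hrng : (Fs.F 1).obj (ModuleCat.of R ↥(LinearMap.range (d (t+1)).hom)) ∈ T := by
          have := claim (s - t - 1) 0 (by omega)
          simpa using this
        have hle : LinearMap.range (d (t+1)).hom ≤ LinearMap.ker (d t).hom := by
          rintro x ⟨y, rfl⟩
          have h0 : (d (t+1) ≫ d t).hom y = 0 := by rw [hdd]; rfl
          simpa [ModuleCat.hom_comp] using h0
        have e := (Submodule.comapSubtypeEquivOfLe hle).symm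
        exact hT.mem_of_iso ((Fs.F 1).mapIso e.toModuleIso) hrng
      -- F^0(H_t) ∈ T via SES (B)
      have hH : (Fs.F 0).obj (ModuleCat.of R (homologyAt d t)) ∈ T := by
        obtain ⟨f, g, hf, hg, hfg⟩ := sesB d t
        exact hT.mem_of_exact ((Fs.F 0).map g) (Fs.δ f g hf hg hfg 0)
          (Fs.exact_map_δ f g hf hg hfg 0) hZ hB
      rcases h2 t ht with h | h
      · exact h
      · exact absurd hH h
  intro t ht
  exact key s t (by omega) ht
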